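/- Let f : (0,1] → ℝ be continuous and strictly increasing. For probability distributions p, q on a finite set A with q_a > 0 for all a, define D(p||q) = Σ_a ∫_{q_a}^{p_a} (f(u) - f(q_a)) du. Then D(p||q) ≥ 0, with equality if and only if p = q. -/

import Mathlib

open Set MeasureTheory

lemma term_nonneg (f : ℝ → ℝ)
    (hfc : ContinuousOn f (Ioc 0 1)) (hfm : StrictMonoOn f (Ioc 0 1))
    (pa qa : ℝ) (hp0 : 0 ≤ pa) (hp1 : pa ≤ 1) (hq0 : 0 < qa) (hq1 : qa ≤ 1) :
    0 ≤ ∫ u in qa..pa, (f u - f qa) := by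
  rcases le_or_gt qa pa with h | h
  · apply intervalIntegral.integral_nonneg h
    intro u hu
    have hu1 : u ∈ Ioc (0:ℝ) 1 := ⟨lt_of_lt_of_le hq0 hu.1, hu.2.trans hp1⟩
    have := hfm.monotoneOn ⟨hq0, hq1⟩ hu1 hu.1
    linarith
  · rw [intervalIntegral.integral_symm]
    rw [intervalIntegral.integral_of_le h.le]
    simp only [neg_nonneg]
    apply setIntegral_nonpos measurableSet_Ioc
    intro u hu
    have hu1 : u ∈ Ioc (0:ℝ) 1 := ⟨lt_of_le_of_lt hp0 hu.1, hu.2.trans hq1⟩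
    have := hfm.monotoneOn hu1 ⟨hq0, hq1⟩ hu.2
    linarith

lemma term_pos (f : ℝ → ℝ)
    (hfc : ContinuousOn f (Ioc 0 1)) (hfm : StrictMonoOn f (Ioc 0 1))
    (pa qa : ℝ) (hp1 : pa ≤ 1) (hq0 : 0 < qa) (h : qa < pa) :
    0 < ∫ u in qa..pa, (f u - f qa) := by
  have hsub : Icc qa pa ⊆ Ioc (0:ℝ) 1 := fun u hu => ⟨lt_of_lt_of_le hq0 hu.1, hu.2.trans hp1⟩
  have hint : IntervalIntegrable (fun u => f u - f qa) MeasureTheory.volume qa pa := by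
    apply ContinuousOn.intervalIntegrable
    rw [uIcc_of_le h.le]
    exact (hfc.mono hsub).sub continuousOn_const
  apply intervalIntegral.intervalIntegral_pos_of_pos_on hint _ h
  intro u hu
  have h1 : u ∈ Ioc (0:ℝ) 1 := hsub ⟨hu.1.le, hu.2.le⟩
  have := hfm ⟨hq0, le_trans (le_of_lt h) hp1⟩ h1 hu.1
  linarith

theorem stmt_0 {A : Type*} [Fintype A] (f : ℝ → ℝ)
    (hfc : ContinuousOn f (Ioc 0 1)) (hfm : StrictMonoOn f (Ioc 0 1))
    (p q : A → ℝ)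
    (hp0 : ∀ a, 0 ≤ p a) (hp1 : ∑ a, p a = 1)
    (hq0 : ∀ a, 0 < q a) (hq1 : ∑ a, q a = 1) :
    0 ≤ ∑ a, ∫ u in (q a)..(p a), (f u - f (q a)) ∧
      ((∑ a, ∫ u in (q a)..(p a), (f u - f (q a))) = 0 ↔ p = q) := by
  have hple : ∀ a, p a ≤ 1 := by
    intro a
    rw [← hp1]
    exact Finset.single_le_sum (fun b _ => hp0 b) (Finset.mem_univ a)
  have hqle : ∀ a, q a ≤ 1 := by
    intro a
    rw [← hq1]
    exact Finset.single_le_sum (fun b _ => (hq0 b).le) (Finset.mem_univ a)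
  have hnn : ∀ a, 0 ≤ ∫ u in (q a)..(p a), (f u - f (q a)) :=
    fun a => term_nonneg f hfc hfm (p a) (q a) (hp0 a) (hple a) (hq0 a) (hqle a)
  have hsumnn : 0 ≤ ∑ a, ∫ u in (q a)..(p a), (f u - f (q a)) :=
    Finset.sum_nonneg (fun a _ => hnn a)
  refine ⟨hsumnn, ?_, ?_⟩
  · intro h0
    by_contra hne
    -- some b with q b < p b
    have hb : ∃ b, q b < p b := by
      by_contra hall
      push_neg at hall
      obtain ⟨a, ha⟩ := Function.ne_iff.mp hne
      have halt : p a < q a := lt_of_le_of_ne (hall a) ha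
      have : ∑ a, p a < ∑ a, q a :=
        Finset.sum_lt_sum (fun b _ => hall b) ⟨a, Finset.mem_univ a, halt⟩
      rw [hp1, hq1] at this
      exact lt_irrefl _ this
    obtain ⟨b, hb⟩ := hb
    have hpos := term_pos f hfc hfm (p b) (q b) (hple b) (hq0 b) hb
    have : 0 < ∑ a, ∫ u in (q a)..(p a), (f u - f (q a)) :=
      Finset.sum_pos' (fun a _ => hnn a) ⟨b, Finset.mem_univ b, hpos⟩
    linarith
  · intro h
    subst h
    simp
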